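/- arXiv:2603.00300 — 3 statements merged into one kernel-verified Lean document; each statement's English description precedes it below -/
import Mathlib

section
/- Suppose h, v : [0,∞) → ℝ are differentiable, h(t) ≥ h_min > 0, ḣ = v* - v, and v̇ = α(V(h) - v) + β(v* - v)/h², where V is C¹ strictly increasing, α, β > 0, and β ≥ V'(h(t))·h(t)² for all t. If at some time τ one has v(τ) = V(h(τ)) < v*, then v̇(τ) ≥ d/dt[V(h(t))]|_{t=τ} > 0; i.e., the velocity increases strictly faster than the optimal velocity at the crossing. -/
theorem stmt_9 (V : ℝ → ℝ) (h v : ℝ → ℝ) (α β vstar hmin : ℝ)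
    (hV : ContDiff ℝ 1 V) (hVmono : StrictMono V) (hV' : ∀ x, 0 < deriv V x)
    (hα : 0 < α) (hβ : 0 < β) (hhmin : 0 < hmin)
    (hh : Differentiable ℝ h) (hv : Differentiable ℝ v)
    (hlow : ∀ t, 0 ≤ t → hmin ≤ h t)
    (hhd : ∀ t, 0 ≤ t → deriv h t = vstar - v t)
    (hvd : ∀ t, 0 ≤ t →
      deriv v t = α * (V (h t) - v t) + β * (vstar - v t) / (h t) ^ 2)
    (hbeta : ∀ t, 0 ≤ t → deriv V (h t) * (h t) ^ 2 ≤ β)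
    (τ : ℝ) (hτ : 0 ≤ τ) (hcross : v τ = V (h τ)) (hlt : V (h τ) < vstar) :
    deriv (fun t => V (h t)) τ ≤ deriv v τ ∧
      0 < deriv (fun t => V (h t)) τ := by
  have hVdiff : Differentiable ℝ V := hV.differentiable one_ne_zero
  have hpos : 0 < h τ := lt_of_lt_of_le hhmin (hlow τ hτ)
  have hsq : 0 < (h τ) ^ 2 := by positivity
  have hderiv : deriv (fun t => V (h t)) τ = deriv V (h τ) * (vstar - v τ) := by
    rw [show (fun t => V (h t)) = V ∘ h from rfl, deriv_comp τ (hVdiff _) (hh _), hhd τ hτ]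
  have hgap : 0 < vstar - v τ := by rw [hcross]; linarith
  have hVp := hV' (h τ)
  constructor
  · rw [hderiv, hvd τ hτ, hcross]
    have hb := hbeta τ hτ
    have key : deriv V (h τ) ≤ β / (h τ) ^ 2 := by
      rw [le_div_iff₀ hsq]; exact hb
    have : deriv V (h τ) * (vstar - V (h τ)) ≤ β / (h τ) ^ 2 * (vstar - V (h τ)) := by
      apply mul_le_mul_of_nonneg_right key
      linarith [hgap, hcross]
    calc deriv V (h τ) * (vstar - V (h τ)) ≤ β / (h τ) ^ 2 * (vstar - V (h τ)) := this
      _ = α * (V (h τ) - V (h τ)) + β * (vstar - V (h τ)) / (h τ) ^ 2 := by ring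
  · rw [hderiv]
    exact mul_pos hVp hgap
end

section
/- Suppose h, v : [0,∞) → ℝ are differentiable, ḣ = v* - v, v̇ = α(V(h) - v) + β(v* - v)/h², with V C¹ strictly increasing, α, β > 0, and β ≥ V'(h(t))·h(t)² for all t. If at some time τ one has v(τ) = V(h(τ)) > v*, then v̇(τ) ≤ d/dt[V(h(t))]|_{t=τ} < 0. -/
theorem stmt_10 (V : ℝ → ℝ) (h v : ℝ → ℝ) (α β vstar : ℝ)
    (hV : ContDiff ℝ 1 V) (hVmono : StrictMono V) (hV' : ∀ x, 0 < deriv V x)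
    (hα : 0 < α) (hβ : 0 < β)
    (hh : Differentiable ℝ h) (hv : Differentiable ℝ v)
    (hpos : ∀ t, 0 ≤ t → 0 < h t)
    (hhd : ∀ t, 0 ≤ t → deriv h t = vstar - v t)
    (hvd : ∀ t, 0 ≤ t →
      deriv v t = α * (V (h t) - v t) + β * (vstar - v t) / (h t) ^ 2)
    (hbeta : ∀ t, 0 ≤ t → deriv V (h t) * (h t) ^ 2 ≤ β)
    (τ : ℝ) (hτ : 0 ≤ τ) (hcross : v τ = V (h τ)) (hgt : vstar < V (h τ)) :
    deriv v τ ≤ deriv (fun t => V (h t)) τ ∧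
      deriv (fun t => V (h t)) τ < 0 := by
  have hVdiff : Differentiable ℝ V := hV.differentiable one_ne_zero
  have hchain : deriv (fun t => V (h t)) τ = deriv V (h τ) * deriv h τ := by
    rw [← Function.comp_def, deriv_comp τ (hVdiff _) (hh _)]
  have hneg : vstar - v τ < 0 := by
    rw [hcross]; linarith
  have hhτ := hpos τ hτ
  have hsq : (0:ℝ) < (h τ) ^ 2 := by positivity
  have hvτ : deriv v τ = β * (vstar - v τ) / (h τ) ^ 2 := by
    rw [hvd τ hτ, hcross]; ring
  have hd : deriv (fun t => V (h t)) τ = deriv V (h τ) * (vstar - v τ) := by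
    rw [hchain, hhd τ hτ]
  constructor
  · rw [hvτ, hd]
    rw [div_le_iff₀ hsq]
    have := hbeta τ hτ
    nlinarith [hV' (h τ)]
  · rw [hd]
    exact mul_neg_of_pos_of_neg (hV' _) hneg
end

section
/- Let V be C¹ with V' > 0, let v* ∈ ℝ, and suppose (v(t), V(h(t))) lies in A ∪ D ∪ {(v*,v*)} for all t ≥ 0, where A = {v* > v > V} and D = {V > v > v*}, with ḣ = v* - v and h > 0. Then the energy E(t) = (1/2)(V(h(t)) - v*)² is non-increasing: Ė(t) ≤ -V'(h(t))·(v(t) - v*)² ≤ 0 for all t. -/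
theorem stmt_14 (V : ℝ → ℝ) (h v : ℝ → ℝ) (vstar : ℝ)
    (hV : ContDiff ℝ 1 V) (hV' : ∀ x, 0 < deriv V x)
    (hh : Differentiable ℝ h) (hv : Differentiable ℝ v)
    (hpos : ∀ t, 0 ≤ t → 0 < h t)
    (hhd : ∀ t, 0 ≤ t → deriv h t = vstar - v t)
    (hregion : ∀ t, 0 ≤ t →
      (V (h t) < v t ∧ v t < vstar) ∨ (vstar < v t ∧ v t < V (h t)) ∨
        (v t = vstar ∧ V (h t) = vstar))
    (E : ℝ → ℝ) (hE : ∀ t, E t = (1 / 2) * (V (h t) - vstar) ^ 2) :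
    ∀ t, 0 ≤ t →
      deriv E t ≤ -deriv V (h t) * (v t - vstar) ^ 2 ∧
        -deriv V (h t) * (v t - vstar) ^ 2 ≤ 0 := by
  intro t ht
  have hEfun : E = fun t => (1 / 2) * (V (h t) - vstar) ^ 2 := funext hE
  have hVh : HasDerivAt (fun s => V (h s)) (deriv V (h t) * deriv h t) t :=
    ((hV.differentiable one_ne_zero) (h t)).hasDerivAt.comp t (hh t).hasDerivAt
  have hEd : HasDerivAt E ((1 / 2) * (2 * (V (h t) - vstar) ^ 1 *
      (deriv V (h t) * deriv h t))) t := by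
    rw [hEfun]
    exact ((hVh.sub_const vstar).pow 2).const_mul (1 / 2)
  have hder : deriv E t = (V (h t) - vstar) * (deriv V (h t) * (vstar - v t)) := by
    rw [hEd.deriv, hhd t ht]; ring
  have hVp := hV' (h t)
  constructor
  · rw [hder]
    rcases hregion t ht with ⟨h1, h2⟩ | ⟨h1, h2⟩ | ⟨h1, h2⟩
    · nlinarith [mul_pos hVp (mul_pos (sub_pos.mpr h2) (sub_pos.mpr h1))]
    · nlinarith [mul_pos hVp (mul_pos (sub_pos.mpr h1) (sub_pos.mpr h2))]
    · rw [h1, h2]; simp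
  · have : 0 ≤ deriv V (h t) * (v t - vstar) ^ 2 :=
      mul_nonneg hVp.le (sq_nonneg _)
    linarith
end
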